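/- Given KKT conditions for the dual problem: stationarity P(m^t(X) - mu*^t >= max_{t' != t}(m^{t'}(X) - mu*^{t'})) + lambda*^t = b^t, complementary slackness lambda*^t mu*^t = 0, and nonnegativity mu*, lambda* >= 0, the deterministic policy pi* assigning each x the treatment argmax_t (m^t(x) - mu*^t) (with lexicographic tie-breaking) satisfies the capacity constraints E[pi*^t(X)] <= b^t for all t. -/

import Mathlib

open MeasureTheory

open Classical in
noncomputable def lexArgmax {ι : Type*} [Fintype ι] [LinearOrder ι] [Nonempty ι] (f : ι → ℝ) : ι :=
  (Finset.univ.filter (fun t => ∀ t', f t' ≤ f t)).min' (by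
    obtain ⟨t, -, ht⟩ := Finset.exists_max_image Finset.univ f Finset.univ_nonempty
    exact ⟨t, Finset.mem_filter.mpr ⟨Finset.mem_univ t, fun t' => ht t' (Finset.mem_univ t')⟩⟩)

open Classical in
lemma lexArgmax_spec {ι : Type*} [Fintype ι] [LinearOrder ι] [Nonempty ι] (f : ι → ℝ) :
    ∀ t', f t' ≤ f (lexArgmax f) := by
  have h : (lexArgmax f) ∈ Finset.univ.filter (fun t => ∀ t', f t' ≤ f t) := by
    unfold lexArgmax
    exact Finset.min'_mem _ _
  exact (Finset.mem_filter.mp h).2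

theorem stmt6 {𝒳 : Type*} [MeasurableSpace 𝒳] (P : Measure 𝒳) [IsProbabilityMeasure P]
    {m : ℕ} (mt : Fin (m + 1) → 𝒳 → ℝ) (b : Fin (m + 1) → ℝ) (hb : ∀ t, 0 < b t ∧ b t ≤ 1)
    (C : ℝ) (hbdd : ∀ t x, |mt t x| ≤ C)
    (hmeas : ∀ t, Measurable (mt t))
    (hatomless : ∀ t t' : Fin (m + 1), t ≠ t' → ∀ z : ℝ, P {x | mt t x - mt t' x = z} = 0)
    (μstar lamstar : Fin (m + 1) → ℝ)
    (hμnn : ∀ t, 0 ≤ μstar t) (hlamnn : ∀ t, 0 ≤ lamstar t)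
    (hstat : ∀ t, (P {x | ∀ t', t' ≠ t → mt t' x - μstar t' ≤ mt t x - μstar t}).toReal
        + lamstar t = b t)
    (hcs : ∀ t, lamstar t * μstar t = 0) :
    ∀ t, (∫ x, (if lexArgmax (fun t' => mt t' x - μstar t') = t then (1 : ℝ) else 0) ∂P)
      ≤ b t := by
  intro t
  set S := {x | ∀ t', t' ≠ t → mt t' x - μstar t' ≤ mt t x - μstar t} with hS
  have hSmeas : MeasurableSet S := by
    have : S = ⋂ t' ∈ {t' : Fin (m+1) | t' ≠ t}, {x | mt t' x - μstar t' ≤ mt t x - μstar t} := by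
      ext x; simp [hS]
    rw [this]
    exact MeasurableSet.biInter (Set.to_countable _) fun t' _ =>
      measurableSet_le ((hmeas t').sub measurable_const) ((hmeas t).sub measurable_const)
  have hptwise : ∀ x, (if lexArgmax (fun t' => mt t' x - μstar t') = t then (1:ℝ) else 0)
      ≤ S.indicator (fun _ => (1:ℝ)) x := by
    intro x
    by_cases h : lexArgmax (fun t' => mt t' x - μstar t') = t
    · have hmem := lexArgmax_spec (fun t' => mt t' x - μstar t')
      rw [h] at hmem
      have hx : x ∈ S := fun t' _ => hmem t'
      simp [h, Set.indicator_of_mem hx]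
    · simp only [h, if_false]
      exact Set.indicator_nonneg (fun _ _ => zero_le_one) x
  have hint : Integrable (S.indicator fun _ => (1:ℝ)) P :=
    (integrable_const (1:ℝ)).indicator hSmeas
  by_cases hf : Integrable
      (fun x => if lexArgmax (fun t' => mt t' x - μstar t') = t then (1:ℝ) else 0) P
  · calc ∫ x, (if lexArgmax (fun t' => mt t' x - μstar t') = t then (1:ℝ) else 0) ∂P
        ≤ ∫ x, S.indicator (fun _ => (1:ℝ)) x ∂P := integral_mono hf hint hptwise
      _ = (P S).toReal := by
          rw [integral_indicator_const _ hSmeas]; simp; rfl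
      _ ≤ b t := by
          have := hstat t
          have := hlamnn t
          linarith
  · rw [integral_undef hf]
    exact (hb t).1.le
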